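/- Let J : H × H → H⁰(0,T) be a mapping that is bilinear in the P-a.s. sense at each time (for each t ∈ [0,T] and all (u₁,v₁),(u₂,v₂) ∈ H × H, α₁,α₂ ∈ ℝ: J_t(α₁u₁+u₂,v₁) = α₁J_t(u₁,v₁) + J_t(u₂,v₁) P-a.s. and J_t(u₁,α₂v₁+v₂) = α₂J_t(u₁,v₁) + J_t(u₁,v₂) P-a.s.). Suppose there exists h ∈ H⁰(0,T) with 0 ≤ h_t ∈ L¹(𝓕_t) for every t ∈ [0,T] and |J_t(u,v)| ≤ h_t ‖u‖_H ‖v‖_H P-a.s. for every t ∈ [0,T] and every (u,v) ∈ H × H. Then there exists an 𝔏₂(H×H)-valued weakly progressively measurable process J̄ such that for every t ∈ [0,T], J̄_t is weakly 𝓕_t-measurable with E[‖J̄_t‖_{𝔏₂(H×H)}] < ∞, J̄_t(u,v) = J_t(u,v) P-a.s. for every (u,v) ∈ H × H, and ‖J̄_t‖_{𝔏₂(H×H)} ≤ h_t P-a.s. Moreover, any two such weakly progressively measurable versions are modifications of each other. -/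

import Mathlib

open MeasureTheory Set
open scoped RealInnerProductSpace

section AuxLemmas
open Filter Topology

variable {H : Type*} [NormedAddCommGroup H] [NormedSpace ℝ H]

private lemma cont_apply₂ (F : H →L[ℝ] H →L[ℝ] ℝ) :
    Continuous fun p : H × H => F p.1 p.2 :=
  isBoundedBilinearMap_apply.continuous.comp
    ((F.continuous.comp continuous_fst).prodMk continuous_snd)

private lemma opNorm_le_of_dense {d : ℕ → H} (hd : DenseRange d)
    (F : H →L[ℝ] H →L[ℝ] ℝ) {C : ℝ} (hC : 0 ≤ C)
    (hb : ∀ i j : ℕ, |F (d i) (d j)| ≤ C * ‖d i‖ * ‖d j‖) : ‖F‖ ≤ C := by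
  have key : ∀ u v : H, |F u v| ≤ C * ‖u‖ * ‖v‖ := by
    have hcl : IsClosed {p : H × H | |F p.1 p.2| ≤ C * ‖p.1‖ * ‖p.2‖} :=
      isClosed_le (cont_apply₂ F).abs (by fun_prop)
    have hdr : DenseRange (Prod.map d d) := hd.prodMap hd
    intro u v
    have hsub : Set.range (Prod.map d d) ⊆ {p : H × H | |F p.1 p.2| ≤ C * ‖p.1‖ * ‖p.2‖} := by
      rintro _ ⟨ij, rfl⟩; exact hb ij.1 ij.2
    exact closure_minimal hsub hcl (hdr (u, v))
  refine F.opNorm_le_bound hC fun u => ?_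
  refine ContinuousLinearMap.opNorm_le_bound _ (by positivity) fun v => ?_
  calc ‖F u v‖ = |F u v| := rfl
  _ ≤ C * ‖u‖ * ‖v‖ := key u v
  _ = C * ‖u‖ * ‖v‖ := by ring

private lemma measurable_opNorm₂ {α : Type*} {mα : MeasurableSpace α}
    {d : ℕ → H} (hd : DenseRange d)
    (G : α → H →L[ℝ] H →L[ℝ] ℝ) (hG : ∀ u v : H, Measurable fun a => G a u v) :
    Measurable fun a => ‖G a‖ := by
  have hformula : ∀ F : H →L[ℝ] H →L[ℝ] ℝ,
      ‖F‖ = ⨆ ij : ℕ × ℕ, |F (d ij.1) (d ij.2)| / (‖d ij.1‖ * ‖d ij.2‖) := by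
    intro F
    have hgle : ∀ ij : ℕ × ℕ, |F (d ij.1) (d ij.2)| / (‖d ij.1‖ * ‖d ij.2‖) ≤ ‖F‖ := by
      intro ij
      rcases eq_or_ne (‖d ij.1‖ * ‖d ij.2‖) 0 with h0 | h0
      · rw [h0, div_zero]; exact norm_nonneg F
      · have hpos : 0 < ‖d ij.1‖ * ‖d ij.2‖ :=
          lt_of_le_of_ne (mul_nonneg (norm_nonneg _) (norm_nonneg _)) (Ne.symm h0)
        rw [div_le_iff₀ hpos]
        calc |F (d ij.1) (d ij.2)| = ‖F (d ij.1) (d ij.2)‖ := rfl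
        _ ≤ ‖F‖ * ‖d ij.1‖ * ‖d ij.2‖ := F.le_opNorm₂ _ _
        _ = ‖F‖ * (‖d ij.1‖ * ‖d ij.2‖) := by ring
    have hbdd : BddAbove (Set.range fun ij : ℕ × ℕ =>
        |F (d ij.1) (d ij.2)| / (‖d ij.1‖ * ‖d ij.2‖)) := by
      refine ⟨‖F‖, ?_⟩; rintro _ ⟨ij, rfl⟩; exact hgle ij
    refine le_antisymm ?_ (ciSup_le hgle)
    have hSnn : (0:ℝ) ≤ ⨆ ij : ℕ × ℕ, |F (d ij.1) (d ij.2)| / (‖d ij.1‖ * ‖d ij.2‖) := by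
      refine le_trans ?_ (le_ciSup hbdd ((0, 0) : ℕ × ℕ))
      positivity
    refine opNorm_le_of_dense hd F hSnn fun i j => ?_
    rcases eq_or_ne (‖d i‖ * ‖d j‖) 0 with h0 | h0
    · rcases mul_eq_zero.1 h0 with hz | hz
      · have : d i = 0 := norm_eq_zero.1 hz
        simp [this, mul_comm]
      · have : d j = 0 := norm_eq_zero.1 hz
        simp [this]
    · have hpos : 0 < ‖d i‖ * ‖d j‖ :=
        lt_of_le_of_ne (mul_nonneg (norm_nonneg _) (norm_nonneg _)) (Ne.symm h0)
      have := le_ciSup hbdd ((i, j) : ℕ × ℕ)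
      rw [div_le_iff₀ hpos] at this
      calc |F (d i) (d j)| ≤ (⨆ ij : ℕ × ℕ, |F (d ij.1) (d ij.2)| / (‖d ij.1‖ * ‖d ij.2‖)) *
          (‖d i‖ * ‖d j‖) := this
      _ = _ := by ring
  have : (fun a => ‖G a‖) = fun a =>
      ⨆ ij : ℕ × ℕ, |G a (d ij.1) (d ij.2)| / (‖d ij.1‖ * ‖d ij.2‖) := by
    funext a; exact hformula (G a)
  rw [this]
  exact Measurable.iSup fun ij => ((hG _ _).abs).div_const _



private lemma exists_extension
    (S : Set H)
    (hsubS : ∀ x ∈ S, ∀ y ∈ S, x - y ∈ S) (haddS : ∀ x ∈ S, ∀ y ∈ S, x + y ∈ S)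
    (e : H → ℕ → H) (heS : ∀ u n, e u n ∈ S)
    (hce : ∀ (u : H) (n : ℕ), ‖e u n - u‖ ≤ 1 / ((n : ℝ) + 1))
    (B : H → H → ℝ) (C : ℝ) (hC : 0 ≤ C)
    (haddL : ∀ x₁ ∈ S, ∀ x₂ ∈ S, ∀ y ∈ S, B (x₁ + x₂) y = B x₁ y + B x₂ y)
    (haddR : ∀ x ∈ S, ∀ y₁ ∈ S, ∀ y₂ ∈ S, B x (y₁ + y₂) = B x y₁ + B x y₂)
    (hbd : ∀ x ∈ S, ∀ y ∈ S, |B x y| ≤ C * ‖x‖ * ‖y‖) :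
    ∃ F : H →L[ℝ] H →L[ℝ] ℝ, ‖F‖ ≤ C ∧
      (∀ u v : H, F u v = Filter.liminf (fun n => B (e u n) (e v n)) Filter.atTop) ∧
      (∀ u v : H, Filter.Tendsto (fun n => B (e u n) (e v n)) Filter.atTop (𝓝 (F u v))) := by
  -- difference decomposition
  have hdiff : ∀ x ∈ S, ∀ x' ∈ S, ∀ y ∈ S, ∀ y' ∈ S,
      B x y - B x' y' = B (x - x') y + B x' (y - y') := by
    intro x hx x' hx' y hy y' hy'
    have h1 : B x y = B (x - x') y + B x' y := by
      have := haddL (x - x') (hsubS x hx x' hx') x' hx' y hy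
      rw [sub_add_cancel] at this; linarith
    have h2 : B x' y = B x' (y - y') + B x' y' := by
      have := haddR x' hx' (y - y') (hsubS y hy y' hy') y' hy'
      rw [sub_add_cancel] at this; linarith
    linarith
  have h1n : Tendsto (fun n : ℕ => 1 / ((n : ℝ) + 1)) atTop (𝓝 0) :=
    tendsto_one_div_add_atTop_nhds_zero_nat
  have htendu : ∀ u : H, Tendsto (e u) atTop (𝓝 u) := by
    intro u
    rw [tendsto_iff_norm_sub_tendsto_zero]
    exact squeeze_zero (fun n => norm_nonneg _) (hce u) h1n
  -- convergence of the defining sequences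
  have key : ∀ u v : H, ∃ l : ℝ, Tendsto (fun n => B (e u n) (e v n)) atTop (𝓝 l) := by
    intro u v
    refine cauchySeq_tendsto_of_complete ?_
    refine cauchySeq_of_le_tendsto_0
      (fun N : ℕ => (C * 2 * (‖v‖ + 1) + C * (‖u‖ + 1) * 2) * (1 / ((N : ℝ) + 1))) ?_ ?_
    · intro n m N hn hm
      have hNn : (1 : ℝ) / ((n : ℝ) + 1) ≤ 1 / ((N : ℝ) + 1) := by
        apply one_div_le_one_div_of_le (by positivity)
        exact_mod_cast Nat.succ_le_succ hn
      have hNm : (1 : ℝ) / ((m : ℝ) + 1) ≤ 1 / ((N : ℝ) + 1) := by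
        apply one_div_le_one_div_of_le (by positivity)
        exact_mod_cast Nat.succ_le_succ hm
      have hxx : ‖e u n - e u m‖ ≤ 2 / ((N : ℝ) + 1) := by
        calc ‖e u n - e u m‖ = ‖(e u n - u) - (e u m - u)‖ := by congr 1; abel
        _ ≤ ‖e u n - u‖ + ‖e u m - u‖ := norm_sub_le _ _
        _ ≤ 1 / ((n : ℝ) + 1) + 1 / ((m : ℝ) + 1) := add_le_add (hce u n) (hce u m)
        _ ≤ 1 / ((N : ℝ) + 1) + 1 / ((N : ℝ) + 1) := add_le_add hNn hNm
        _ = 2 / ((N : ℝ) + 1) := by ring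
      have hyy : ‖e v n - e v m‖ ≤ 2 / ((N : ℝ) + 1) := by
        calc ‖e v n - e v m‖ = ‖(e v n - v) - (e v m - v)‖ := by congr 1; abel
        _ ≤ ‖e v n - v‖ + ‖e v m - v‖ := norm_sub_le _ _
        _ ≤ 1 / ((n : ℝ) + 1) + 1 / ((m : ℝ) + 1) := add_le_add (hce v n) (hce v m)
        _ ≤ 1 / ((N : ℝ) + 1) + 1 / ((N : ℝ) + 1) := add_le_add hNn hNm
        _ = 2 / ((N : ℝ) + 1) := by ring
      have hvb : ‖e v n‖ ≤ ‖v‖ + 1 := by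
        have h1 : (1 : ℝ) / ((n : ℝ) + 1) ≤ 1 := by
          rw [div_le_one (by positivity)]; simp [Nat.cast_nonneg]
        calc ‖e v n‖ = ‖(e v n - v) + v‖ := by congr 1; abel
        _ ≤ ‖e v n - v‖ + ‖v‖ := norm_add_le _ _
        _ ≤ 1 + ‖v‖ := add_le_add (le_trans (hce v n) h1) le_rfl
        _ = ‖v‖ + 1 := by ring
      have hub : ‖e u m‖ ≤ ‖u‖ + 1 := by
        have h1 : (1 : ℝ) / ((m : ℝ) + 1) ≤ 1 := by
          rw [div_le_one (by positivity)]; simp [Nat.cast_nonneg]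
        calc ‖e u m‖ = ‖(e u m - u) + u‖ := by congr 1; abel
        _ ≤ ‖e u m - u‖ + ‖u‖ := norm_add_le _ _
        _ ≤ 1 + ‖u‖ := add_le_add (le_trans (hce u m) h1) le_rfl
        _ = ‖u‖ + 1 := by ring
      rw [Real.dist_eq]
      rw [hdiff _ (heS u n) _ (heS u m) _ (heS v n) _ (heS v m)]
      have hb1 := hbd _ (hsubS _ (heS u n) _ (heS u m)) _ (heS v n)
      have hb2 := hbd _ (heS u m) _ (hsubS _ (heS v n) _ (heS v m))
      have hN1 : (0:ℝ) ≤ 1 / ((N : ℝ) + 1) := by positivity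
      calc |B (e u n - e u m) (e v n) + B (e u m) (e v n - e v m)|
          ≤ |B (e u n - e u m) (e v n)| + |B (e u m) (e v n - e v m)| := abs_add_le _ _
        _ ≤ C * ‖e u n - e u m‖ * ‖e v n‖ + C * ‖e u m‖ * ‖e v n - e v m‖ :=
            add_le_add hb1 hb2
        _ ≤ C * (2 / ((N : ℝ) + 1)) * (‖v‖ + 1) + C * (‖u‖ + 1) * (2 / ((N : ℝ) + 1)) := by
            have e1 : C * ‖e u n - e u m‖ * ‖e v n‖ ≤ C * (2 / ((N : ℝ) + 1)) * (‖v‖ + 1) :=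
              mul_le_mul (mul_le_mul le_rfl hxx (norm_nonneg _) hC) hvb (norm_nonneg _)
                (by positivity)
            have e2 : C * ‖e u m‖ * ‖e v n - e v m‖ ≤ C * (‖u‖ + 1) * (2 / ((N : ℝ) + 1)) :=
              mul_le_mul (mul_le_mul le_rfl hub (norm_nonneg _) hC) hyy (norm_nonneg _)
                (by positivity)
            linarith
        _ = (C * 2 * (‖v‖ + 1) + C * (‖u‖ + 1) * 2) * (1 / ((N : ℝ) + 1)) := by ring
    · have := h1n.const_mul (C * 2 * (‖v‖ + 1) + C * (‖u‖ + 1) * 2)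
      simpa using this
  choose L hL using key
  -- limits do not depend on the approximating sequences
  have uniqlim : ∀ (u v : H) (x y : ℕ → H), (∀ n, x n ∈ S) → (∀ n, y n ∈ S) →
      Tendsto x atTop (𝓝 u) → Tendsto y atTop (𝓝 v) →
      Tendsto (fun n => B (x n) (y n)) atTop (𝓝 (L u v)) := by
    intro u v x y hx hy hxu hyv
    have hdt : Tendsto (fun n => B (x n) (y n) - B (e u n) (e v n)) atTop (𝓝 0) := by
      rw [tendsto_zero_iff_norm_tendsto_zero]
      have hbound : ∀ n, ‖B (x n) (y n) - B (e u n) (e v n)‖ ≤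
          C * ‖x n - e u n‖ * ‖y n‖ + C * ‖e u n‖ * ‖y n - e v n‖ := by
        intro n
        rw [hdiff _ (hx n) _ (heS u n) _ (hy n) _ (heS v n)]
        calc ‖B (x n - e u n) (y n) + B (e u n) (y n - e v n)‖
            ≤ |B (x n - e u n) (y n)| + |B (e u n) (y n - e v n)| := norm_add_le _ _
          _ ≤ C * ‖x n - e u n‖ * ‖y n‖ + C * ‖e u n‖ * ‖y n - e v n‖ :=
              add_le_add (hbd _ (hsubS _ (hx n) _ (heS u n)) _ (hy n))
                (hbd _ (heS u n) _ (hsubS _ (hy n) _ (heS v n)))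
      have hrhs : Tendsto (fun n => C * ‖x n - e u n‖ * ‖y n‖ + C * ‖e u n‖ * ‖y n - e v n‖)
          atTop (𝓝 (C * ‖u - u‖ * ‖v‖ + C * ‖u‖ * ‖v - v‖)) := by
        apply Tendsto.add
        · exact (((tendsto_const_nhds (x := C)).mul ((hxu.sub (htendu u)).norm)).mul hyv.norm)
        · exact (((tendsto_const_nhds (x := C)).mul ((htendu u).norm)).mul ((hyv.sub (htendu v)).norm))
      have hrhs0 : Tendsto (fun n => C * ‖x n - e u n‖ * ‖y n‖ + C * ‖e u n‖ * ‖y n - e v n‖)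
          atTop (𝓝 0) := by simpa using hrhs
      exact squeeze_zero (fun n => norm_nonneg _) hbound hrhs0
    have := hdt.add (hL u v)
    simpa using this
  have habs : ∀ u v : H, |L u v| ≤ C * ‖u‖ * ‖v‖ := by
    intro u v
    refine le_of_tendsto_of_tendsto' (hL u v).abs ?_
      (fun n => hbd _ (heS u n) _ (heS v n))
    exact ((tendsto_const_nhds (x := C)).mul (htendu u).norm).mul (htendu v).norm
  have haddl : ∀ u u' v : H, L (u + u') v = L u v + L u' v := by
    intro u u' v
    have t1 := uniqlim (u + u') v (fun n => e u n + e u' n) (e v)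
      (fun n => haddS _ (heS u n) _ (heS u' n)) (heS v)
      ((htendu u).add (htendu u')) (htendu v)
    have heq : ∀ n, B (e u n + e u' n) (e v n) = B (e u n) (e v n) + B (e u' n) (e v n) :=
      fun n => haddL _ (heS u n) _ (heS u' n) _ (heS v n)
    have t2 : Tendsto (fun n => B (e u n + e u' n) (e v n)) atTop (𝓝 (L u v + L u' v)) := by
      simp only [heq]; exact (hL u v).add (hL u' v)
    exact tendsto_nhds_unique t1 t2
  have haddr : ∀ u v v' : H, L u (v + v') = L u v + L u v' := by
    intro u v v'
    have t1 := uniqlim u (v + v') (e u) (fun n => e v n + e v' n)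
      (heS u) (fun n => haddS _ (heS v n) _ (heS v' n))
      (htendu u) ((htendu v).add (htendu v'))
    have heq : ∀ n, B (e u n) (e v n + e v' n) = B (e u n) (e v n) + B (e u n) (e v' n) :=
      fun n => haddR _ (heS u n) _ (heS v n) _ (heS v' n)
    have t2 : Tendsto (fun n => B (e u n) (e v n + e v' n)) atTop (𝓝 (L u v + L u v')) := by
      simp only [heq]; exact (hL u v).add (hL u v')
    exact tendsto_nhds_unique t1 t2
  have hsmull : ∀ (c : ℝ) (u v : H), L (c • u) v = c * L u v := by
    intro c u v
    let φ : H →+ ℝ := AddMonoidHom.mk' (fun u => L u v) (fun u u' => haddl u u' v)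
    have hφc : Continuous φ := by
      have hlip : LipschitzWith (Real.toNNReal (C * ‖v‖)) φ :=
        AddMonoidHomClass.lipschitz_of_bound φ (C * ‖v‖) (fun x => by
          calc ‖φ x‖ = |L x v| := rfl
          _ ≤ C * ‖x‖ * ‖v‖ := habs x v
          _ = C * ‖v‖ * ‖x‖ := by ring)
      exact hlip.continuous
    have h2 := (φ.toRealLinearMap hφc).map_smul c u
    exact h2
  have hsmulr : ∀ (c : ℝ) (u v : H), L u (c • v) = c * L u v := by
    intro c u v
    let φ : H →+ ℝ := AddMonoidHom.mk' (fun v => L u v) (fun v v' => haddr u v v')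
    have hφc : Continuous φ := by
      have hlip : LipschitzWith (Real.toNNReal (C * ‖u‖)) φ :=
        AddMonoidHomClass.lipschitz_of_bound φ (C * ‖u‖) (fun x => by
          calc ‖φ x‖ = |L u x| := rfl
          _ ≤ C * ‖u‖ * ‖x‖ := habs u x)
      exact hlip.continuous
    have h2 := (φ.toRealLinearMap hφc).map_smul c v
    exact h2
  let F₀ : H →ₗ[ℝ] H →ₗ[ℝ] ℝ := LinearMap.mk₂ ℝ L
    (fun m₁ m₂ n => haddl m₁ m₂ n)
    (fun c m n => by simpa [smul_eq_mul] using hsmull c m n)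
    (fun m n₁ n₂ => haddr m n₁ n₂)
    (fun c m n => by simpa [smul_eq_mul] using hsmulr c m n)
  let F : H →L[ℝ] H →L[ℝ] ℝ := LinearMap.mkContinuous₂ F₀ C
    (fun u v => by simpa [F₀, Real.norm_eq_abs] using habs u v)
  have hFeval : ∀ u v : H, F u v = L u v := fun u v => rfl
  refine ⟨F, F₀.mkContinuous₂_norm_le hC _, ?_, ?_⟩
  · intro u v
    rw [hFeval u v, ← (hL u v).liminf_eq]
  · intro u v
    rw [hFeval u v]; exact hL u v


end AuxLemmas

/-- **Aggregation of an a.s.-bilinear family of processes into a weakly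
progressively measurable bilinear-form valued process** (Theorem 2.4 (ii) of the
paper, sufficiency direction, together with the uniqueness-up-to-modification
assertion). -/
theorem aggregation_of_bilinear_process
    {Ω H : Type*} [NormedAddCommGroup H] [InnerProductSpace ℝ H] [CompleteSpace H]
    [TopologicalSpace.SeparableSpace H]
    {m0 : MeasurableSpace Ω} (μ : Measure Ω) [IsProbabilityMeasure μ]
    (T : ℝ) (hT : 0 < T) (𝓕 : Filtration ℝ m0)
    (J : H → H → ℝ → Ω → ℝ)
    (hJprog : ∀ u v : H, ProgMeasurable 𝓕 (J u v))
    (hlinL : ∀ t ∈ Icc (0 : ℝ) T, ∀ (u₁ u₂ v : H) (c : ℝ),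
      ∀ᵐ ω ∂μ, J (c • u₁ + u₂) v t ω = c * J u₁ v t ω + J u₂ v t ω)
    (hlinR : ∀ t ∈ Icc (0 : ℝ) T, ∀ (u v₁ v₂ : H) (c : ℝ),
      ∀ᵐ ω ∂μ, J u (c • v₁ + v₂) t ω = c * J u v₁ t ω + J u v₂ t ω)
    (h : ℝ → Ω → ℝ) (hhprog : ProgMeasurable 𝓕 h)
    (hh0 : ∀ t ∈ Icc (0 : ℝ) T, ∀ᵐ ω ∂μ, 0 ≤ h t ω)
    (hhint : ∀ t ∈ Icc (0 : ℝ) T, Integrable (h t) μ)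
    (hdom : ∀ t ∈ Icc (0 : ℝ) T, ∀ u v : H,
      ∀ᵐ ω ∂μ, |J u v t ω| ≤ h t ω * ‖u‖ * ‖v‖) :
    (∃ Jb : ℝ → Ω → H →L[ℝ] H →L[ℝ] ℝ,
      (∀ u v : H, ProgMeasurable 𝓕 fun t ω => Jb t ω u v) ∧
      ∀ t ∈ Icc (0 : ℝ) T,
        (∀ u v : H, Measurable[𝓕 t] fun ω => Jb t ω u v) ∧
        Integrable (fun ω => ‖Jb t ω‖) μ ∧
        (∀ u v : H, (fun ω => Jb t ω u v) =ᵐ[μ] J u v t) ∧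
        (∀ᵐ ω ∂μ, ‖Jb t ω‖ ≤ h t ω)) ∧
    (∀ Jb₁ Jb₂ : ℝ → Ω → H →L[ℝ] H →L[ℝ] ℝ,
      (∀ u v : H, ProgMeasurable 𝓕 fun t ω => Jb₁ t ω u v) →
      (∀ u v : H, ProgMeasurable 𝓕 fun t ω => Jb₂ t ω u v) →
      (∀ t ∈ Icc (0 : ℝ) T, ∀ u v : H, (fun ω => Jb₁ t ω u v) =ᵐ[μ] J u v t) →
      (∀ t ∈ Icc (0 : ℝ) T, ∀ u v : H, (fun ω => Jb₂ t ω u v) =ᵐ[μ] J u v t) →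
      ∀ t ∈ Icc (0 : ℝ) T, ∀ᵐ ω ∂μ, Jb₁ t ω = Jb₂ t ω) := by
  classical
  haveI : Nonempty H := ⟨0⟩
  obtain ⟨d, hd⟩ := TopologicalSpace.exists_dense_seq H
  -- a countable dense set closed under addition and subtraction
  set Sm : Submodule ℤ H := Submodule.span ℤ (Set.range d) with hSmdef
  set S : Set H := (Sm : Set H) with hSdef
  have hSd : Dense S := hd.mono Submodule.subset_span
  have hScount : S.Countable := by
    have : Countable (Submodule.span ℤ (Set.range d)) := inferInstance
    exact Set.countable_coe_iff.mp this
  have hsubS : ∀ x ∈ S, ∀ y ∈ S, x - y ∈ S := fun x hx y hy => Sm.sub_mem hx hy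
  have haddS : ∀ x ∈ S, ∀ y ∈ S, x + y ∈ S := fun x hx y hy => Sm.add_mem hx hy
  obtain ⟨q, hq⟩ := hScount.exists_eq_range ⟨0, Sm.zero_mem⟩
  have hqS : ∀ i, q i ∈ S := fun i => hq ▸ Set.mem_range_self i
  have hmemS : ∀ x, x ∈ S → ∃ i, q i = x := by
    intro x hx; rw [hq] at hx; exact hx
  -- approximating sequences from `S`
  have happrox : ∀ (u : H) (n : ℕ), ∃ x, x ∈ S ∧ ‖x - u‖ ≤ 1 / ((n : ℝ) + 1) := by
    intro u n
    obtain ⟨x, hxS, hxd⟩ := hSd.exists_dist_lt u (show (0:ℝ) < 1 / ((n:ℝ)+1) by positivity)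
    exact ⟨x, hxS, by rw [← dist_eq_norm]; exact (dist_comm x u ▸ hxd).le⟩
  choose e heS hce using happrox
  have h1n : Filter.Tendsto (fun n : ℕ => 1 / ((n : ℝ) + 1)) Filter.atTop (nhds 0) :=
    tendsto_one_div_add_atTop_nhds_zero_nat
  have htendu : ∀ u : H, Filter.Tendsto (e u) Filter.atTop (nhds u) := by
    intro u
    rw [tendsto_iff_norm_sub_tendsto_zero]
    exact squeeze_zero (fun n => norm_nonneg _) (hce u) h1n
  -- the good set
  set A : Set (ℝ × Ω) := {p : ℝ × Ω |
    0 ≤ h p.1 p.2 ∧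
    (∀ ij : ℕ × ℕ, |J (q ij.1) (q ij.2) p.1 p.2| ≤ h p.1 p.2 * ‖q ij.1‖ * ‖q ij.2‖) ∧
    (∀ ijk : ℕ × ℕ × ℕ, J (q ijk.1 + q ijk.2.1) (q ijk.2.2) p.1 p.2
        = J (q ijk.1) (q ijk.2.2) p.1 p.2 + J (q ijk.2.1) (q ijk.2.2) p.1 p.2) ∧
    (∀ ijk : ℕ × ℕ × ℕ, J (q ijk.1) (q ijk.2.1 + q ijk.2.2) p.1 p.2
        = J (q ijk.1) (q ijk.2.1) p.1 p.2 + J (q ijk.1) (q ijk.2.2) p.1 p.2)} with hAdef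
  have hAprops : ∀ p ∈ A,
      (∀ x ∈ S, ∀ y ∈ S, |J x y p.1 p.2| ≤ h p.1 p.2 * ‖x‖ * ‖y‖) ∧
      (∀ x₁ ∈ S, ∀ x₂ ∈ S, ∀ y ∈ S,
        J (x₁ + x₂) y p.1 p.2 = J x₁ y p.1 p.2 + J x₂ y p.1 p.2) ∧
      (∀ x ∈ S, ∀ y₁ ∈ S, ∀ y₂ ∈ S,
        J x (y₁ + y₂) p.1 p.2 = J x y₁ p.1 p.2 + J x y₂ p.1 p.2) := by
    intro p hp
    obtain ⟨h0, h1, h2, h3⟩ := hp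
    refine ⟨?_, ?_, ?_⟩
    · intro x hx y hy
      obtain ⟨i, rfl⟩ := hmemS x hx
      obtain ⟨j, rfl⟩ := hmemS y hy
      exact h1 (i, j)
    · intro x₁ hx₁ x₂ hx₂ y hy
      obtain ⟨i, rfl⟩ := hmemS x₁ hx₁
      obtain ⟨j, rfl⟩ := hmemS x₂ hx₂
      obtain ⟨k, rfl⟩ := hmemS y hy
      exact h2 (i, j, k)
    · intro x hx y₁ hy₁ y₂ hy₂
      obtain ⟨i, rfl⟩ := hmemS x hx
      obtain ⟨j, rfl⟩ := hmemS y₁ hy₁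
      obtain ⟨k, rfl⟩ := hmemS y₂ hy₂
      exact h3 (i, j, k)
  -- construct the aggregated process
  have hext : ∀ p : ℝ × Ω, ∃ F : H →L[ℝ] H →L[ℝ] ℝ,
      (p ∈ A → ‖F‖ ≤ h p.1 p.2 ∧
        (∀ u v : H, F u v =
          Filter.liminf (fun n => J (e u n) (e v n) p.1 p.2) Filter.atTop) ∧
        (∀ u v : H, Filter.Tendsto (fun n => J (e u n) (e v n) p.1 p.2)
          Filter.atTop (nhds (F u v)))) ∧
      (p ∉ A → F = 0) := by
    intro p
    by_cases hp : p ∈ A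
    · obtain ⟨hbd', haddL', haddR'⟩ := hAprops p hp
      obtain ⟨F, hF1, hF2, hF3⟩ := exists_extension S hsubS haddS e heS hce
        (fun x y => J x y p.1 p.2) (h p.1 p.2) hp.1 haddL' haddR' hbd'
      exact ⟨F, fun _ => ⟨hF1, hF2, hF3⟩, fun hn => absurd hp hn⟩
    · exact ⟨0, fun hc => absurd hc hp, fun _ => rfl⟩
  choose Φ hΦA hΦ0 using hext
  have heval : ∀ (u v : H) (p : ℝ × Ω),
      Φ p u v = if p ∈ A
        then Filter.liminf (fun n => J (e u n) (e v n) p.1 p.2) Filter.atTop else 0 := by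
    intro u v p
    by_cases hp : p ∈ A
    · rw [if_pos hp]; exact ((hΦA p hp).2.1) u v
    · rw [if_neg hp, hΦ0 p hp]; simp
  -- progressive measurability of the evaluations
  have hprog : ∀ u v : H, ProgMeasurable 𝓕 fun t ω => Φ (t, ω) u v := by
    intro u v r
    apply Measurable.stronglyMeasurable
    letI mr : MeasurableSpace (↥(Set.Iic r) × Ω) := Subtype.instMeasurableSpace.prod (𝓕 r)
    have hJm : ∀ x y : H, Measurable fun p : ↥(Set.Iic r) × Ω => J x y (p.1 : ℝ) p.2 :=
      fun x y => (hJprog x y r).measurable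
    have hhm : Measurable fun p : ↥(Set.Iic r) × Ω => h (p.1 : ℝ) p.2 :=
      (hhprog r).measurable
    have hAm : MeasurableSet {p : ↥(Set.Iic r) × Ω | (((p.1 : ℝ), p.2) : ℝ × Ω) ∈ A} := by
      have hrw : {p : ↥(Set.Iic r) × Ω | (((p.1 : ℝ), p.2) : ℝ × Ω) ∈ A} =
          {p : ↥(Set.Iic r) × Ω | 0 ≤ h (p.1 : ℝ) p.2} ∩
          ((⋂ ij : ℕ × ℕ, {p : ↥(Set.Iic r) × Ω |
            |J (q ij.1) (q ij.2) (p.1 : ℝ) p.2| ≤ h (p.1 : ℝ) p.2 * ‖q ij.1‖ * ‖q ij.2‖}) ∩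
          ((⋂ ijk : ℕ × ℕ × ℕ, {p : ↥(Set.Iic r) × Ω |
            J (q ijk.1 + q ijk.2.1) (q ijk.2.2) (p.1 : ℝ) p.2
              = J (q ijk.1) (q ijk.2.2) (p.1 : ℝ) p.2
                + J (q ijk.2.1) (q ijk.2.2) (p.1 : ℝ) p.2}) ∩
          (⋂ ijk : ℕ × ℕ × ℕ, {p : ↥(Set.Iic r) × Ω |
            J (q ijk.1) (q ijk.2.1 + q ijk.2.2) (p.1 : ℝ) p.2
              = J (q ijk.1) (q ijk.2.1) (p.1 : ℝ) p.2
                + J (q ijk.1) (q ijk.2.2) (p.1 : ℝ) p.2}))) := by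
        ext p
        simp only [hAdef, Set.mem_setOf_eq, Set.mem_inter_iff, Set.mem_iInter]
      rw [hrw]
      refine (measurableSet_le measurable_const hhm).inter (MeasurableSet.inter ?_
        (MeasurableSet.inter ?_ ?_))
      · exact MeasurableSet.iInter fun ij =>
          measurableSet_le ((hJm _ _).abs) ((hhm.mul_const _).mul_const _)
      · exact MeasurableSet.iInter fun ijk =>
          measurableSet_eq_fun (hJm _ _) ((hJm _ _).add (hJm _ _))
      · exact MeasurableSet.iInter fun ijk =>
          measurableSet_eq_fun (hJm _ _) ((hJm _ _).add (hJm _ _))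
    have hfeq : (fun p : ↥(Set.Iic r) × Ω => Φ ((p.1 : ℝ), p.2) u v) =
        fun p : ↥(Set.Iic r) × Ω => if (((p.1 : ℝ), p.2) : ℝ × Ω) ∈ A
          then Filter.liminf (fun n => J (e u n) (e v n) (p.1 : ℝ) p.2) Filter.atTop
          else 0 := by
      funext p; exact heval u v _
    show Measurable fun p : ↥(Set.Iic r) × Ω => Φ ((p.1 : ℝ), p.2) u v
    rw [hfeq]
    exact Measurable.ite hAm (Measurable.liminf fun n => hJm _ _) measurable_const
  constructor
  · refine ⟨fun t ω => Φ (t, ω), hprog, ?_⟩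
    intro t ht
    -- the good set has full measure at time t
    have hAae : ∀ᵐ ω ∂μ, ((t, ω) : ℝ × Ω) ∈ A := by
      have h2 : ∀ᵐ ω ∂μ, ∀ ij : ℕ × ℕ,
          |J (q ij.1) (q ij.2) t ω| ≤ h t ω * ‖q ij.1‖ * ‖q ij.2‖ :=
        ae_all_iff.2 fun ij => hdom t ht _ _
      have h3 : ∀ᵐ ω ∂μ, ∀ ijk : ℕ × ℕ × ℕ,
          J (q ijk.1 + q ijk.2.1) (q ijk.2.2) t ω
            = J (q ijk.1) (q ijk.2.2) t ω + J (q ijk.2.1) (q ijk.2.2) t ω := by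
        refine ae_all_iff.2 fun ijk => ?_
        filter_upwards [hlinL t ht (q ijk.1) (q ijk.2.1) (q ijk.2.2) 1] with ω hω
        simpa using hω
      have h4 : ∀ᵐ ω ∂μ, ∀ ijk : ℕ × ℕ × ℕ,
          J (q ijk.1) (q ijk.2.1 + q ijk.2.2) t ω
            = J (q ijk.1) (q ijk.2.1) t ω + J (q ijk.1) (q ijk.2.2) t ω := by
        refine ae_all_iff.2 fun ijk => ?_
        filter_upwards [hlinR t ht (q ijk.1) (q ijk.2.1) (q ijk.2.2) 1] with ω hω
        simpa using hω
      filter_upwards [hh0 t ht, h2, h3, h4] with ω hb0 hb1 hb2 hb3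
      exact ⟨hb0, hb1, hb2, hb3⟩
    have hnormle : ∀ᵐ ω ∂μ, ‖Φ (t, ω)‖ ≤ h t ω := by
      filter_upwards [hAae] with ω hω
      exact (hΦA (t, ω) hω).1
    have hmeas : ∀ u v : H, Measurable[𝓕 t] fun ω => Φ (t, ω) u v :=
      fun u v => ((IsStronglyProgressive.stronglyAdapted (hprog u v)) t).measurable
    refine ⟨hmeas, ?_, ?_, hnormle⟩
    · -- integrability of the norm
      have hmeasnorm : Measurable fun ω => ‖Φ (t, ω)‖ :=
        measurable_opNorm₂ hd (fun ω => Φ (t, ω))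
          (fun u v => ((hmeas u v).mono (𝓕.le t) le_rfl))
      refine (hhint t ht).mono hmeasnorm.aestronglyMeasurable ?_
      filter_upwards [hnormle] with ω hω
      have hb : ‖Φ (t, ω)‖ ≤ |h t ω| := hω.trans (le_abs_self _)
      simpa [Real.norm_eq_abs, abs_of_nonneg (norm_nonneg (Φ (t, ω)))] using hb
    · -- the aggregated process is a version of J
      intro u v
      have hn : ∀ n : ℕ, ∀ᵐ ω ∂μ, |J (e u n) (e v n) t ω - J u v t ω| ≤
          h t ω * ‖e u n - u‖ * ‖e v n‖ + h t ω * ‖u‖ * ‖e v n - v‖ := by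
        intro n
        filter_upwards [hlinL t ht (e u n - u) u (e v n) 1,
          hlinR t ht u (e v n - v) v 1,
          hdom t ht (e u n - u) (e v n), hdom t ht u (e v n - v)] with ω w1 w2 w3 w4
        rw [one_smul, sub_add_cancel, one_mul] at w1
        rw [one_smul, sub_add_cancel, one_mul] at w2
        have hsplit : J (e u n) (e v n) t ω - J u v t ω
            = J (e u n - u) (e v n) t ω + J u (e v n - v) t ω := by
          rw [w1, w2]; ring
        rw [hsplit]
        calc |J (e u n - u) (e v n) t ω + J u (e v n - v) t ω|
            ≤ |J (e u n - u) (e v n) t ω| + |J u (e v n - v) t ω| := abs_add_le _ _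
          _ ≤ h t ω * ‖e u n - u‖ * ‖e v n‖ + h t ω * ‖u‖ * ‖e v n - v‖ :=
              add_le_add w3 w4
      filter_upwards [hAae, ae_all_iff.2 hn] with ω hωA hωn
      have h2' : Filter.Tendsto (fun n => ‖e v n - v‖) Filter.atTop (nhds 0) :=
        squeeze_zero (fun n => norm_nonneg _) (hce v) h1n
      have h1' : Filter.Tendsto (fun n => ‖e u n - u‖) Filter.atTop (nhds 0) :=
        squeeze_zero (fun n => norm_nonneg _) (hce u) h1n
      have h3' : Filter.Tendsto (fun n => ‖e v n‖) Filter.atTop (nhds ‖v‖) :=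
        (htendu v).norm
      have htend1 : Filter.Tendsto (fun n => J (e u n) (e v n) t ω)
          Filter.atTop (nhds (J u v t ω)) := by
        rw [tendsto_iff_dist_tendsto_zero]
        refine squeeze_zero
          (g := fun n => h t ω * ‖e u n - u‖ * ‖e v n‖ + h t ω * ‖u‖ * ‖e v n - v‖)
          (fun n => dist_nonneg)
          (fun n => by rw [Real.dist_eq]; exact hωn n) ?_
        have hcomb := (((tendsto_const_nhds (x := h t ω)).mul h1').mul h3').add
          (((tendsto_const_nhds (x := h t ω)).mul
            (tendsto_const_nhds (x := ‖u‖))).mul h2')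
        simpa using hcomb
      have htend2 := (hΦA (t, ω) hωA).2.2 u v
      exact tendsto_nhds_unique htend2 htend1
  · -- uniqueness up to modification
    intro Jb₁ Jb₂ _ _ hv1 hv2 t ht
    have hae : ∀ᵐ ω ∂μ, ∀ ij : ℕ × ℕ,
        Jb₁ t ω (d ij.1) (d ij.2) = Jb₂ t ω (d ij.1) (d ij.2) :=
      ae_all_iff.2 fun ij => (hv1 t ht _ _).trans (hv2 t ht _ _).symm
    filter_upwards [hae] with ω hω
    have hfun : (fun p : H × H => Jb₁ t ω p.1 p.2) = fun p : H × H => Jb₂ t ω p.1 p.2 := by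
      refine Continuous.ext_on (hd.prodMap hd) (cont_apply₂ _) (cont_apply₂ _) ?_
      rintro _ ⟨ij, rfl⟩
      exact hω ij
    exact ContinuousLinearMap.ext fun u => ContinuousLinearMap.ext fun v =>
      congrFun hfun (u, v)
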